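/- Let R be a ring such that the principal right ideal rR has a serial factorization for every non-zero r ∈ R. Then every finitely generated non-zero right ideal A of R can be generated by two elements, the first of which can be any arbitrarily fixed non-zero element of A; that is, for every non-zero r ∈ A there exists s ∈ A with A = rR + sR. -/

import Mathlib

open MulOpposite

universe u

/-- The product `A·B` of two right ideals of `R` (right ideals are `Rᵐᵒᵖ`-submodules of `R`):
the set of all finite sums of products `a * b` with `a ∈ A`, `b ∈ B`. -/
def rmul {R : Type u} [Ring R] (A B : Submodule Rᵐᵒᵖ R) : Submodule Rᵐᵒᵖ R :=
  Submodule.span Rᵐᵒᵖ {x : R | ∃ a ∈ A, ∃ b ∈ B, x = a * b}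

/-- The product `A₁⋯Aₙ` of a (possibly empty) list of right ideals. -/
def rprod {R : Type u} [Ring R] : List (Submodule Rᵐᵒᵖ R) → Submodule Rᵐᵒᵖ R
  | [] => ⊤
  | [A] => A
  | A :: l => rmul A (rprod l)

/-- A finite family of right ideals is coindependent if `Aᵢ + ⋂_{j ≠ i} Aⱼ = R` for every `i`. -/
def Coindep {R : Type u} [Ring R] {n : ℕ} (A : Fin n → Submodule Rᵐᵒᵖ R) : Prop :=
  ∀ i, A i ⊔ (⨅ j, ⨅ (_ : j ≠ i), A j) = ⊤

/-- A module is uniserial if its submodules are linearly ordered by inclusion. -/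
def IsUniserialMod (S : Type*) [Ring S] (M : Type*) [AddCommGroup M] [Module S M] : Prop :=
  ∀ N P : Submodule S M, N ≤ P ∨ P ≤ N

/-- A right ideal is a two-sided ideal if it is also closed under left multiplication. -/
def IsTwoSidedRid {R : Type u} [Ring R] (A : Submodule Rᵐᵒᵖ R) : Prop :=
  ∀ (r : R), ∀ x ∈ A, r * x ∈ A

/-- A serial factorization of a right ideal `A`: a factorization `A = A₁⋯Aₙ` into proper
right ideals that pairwise commute, form a coindependent family, and are such that every
quotient `R/Aᵢ` is a uniserial right `R`-module. -/
def IsSerialFact {R : Type u} [Ring R] {n : ℕ} (A : Submodule Rᵐᵒᵖ R)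
    (F : Fin n → Submodule Rᵐᵒᵖ R) : Prop :=
  (∀ i, F i ≠ ⊤) ∧ (∀ i j, rmul (F i) (F j) = rmul (F j) (F i)) ∧ Coindep F ∧
    (∀ i, IsUniserialMod Rᵐᵒᵖ (R ⧸ F i)) ∧ A = rprod (List.ofFn F)

/-- A right ideal has a serial factorization if it admits one of some length. -/
def HasSerialFact {R : Type u} [Ring R] (A : Submodule Rᵐᵒᵖ R) : Prop :=
  ∃ (n : ℕ) (F : Fin n → Submodule Rᵐᵒᵖ R), IsSerialFact A F

/-- A right chain ring: its right ideals are linearly ordered by inclusion. -/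
def IsRightChainRing (R : Type u) [Ring R] : Prop :=
  ∀ A B : Submodule Rᵐᵒᵖ R, A ≤ B ∨ B ≤ A

/-- A ring is right duo if every right ideal is a two-sided ideal. -/
def IsRightDuo (R : Type u) [Ring R] : Prop :=
  ∀ A : Submodule Rᵐᵒᵖ R, IsTwoSidedRid A

/-- The principal right ideal `rR`. -/
def rspan {R : Type u} [Ring R] (r : R) : Submodule Rᵐᵒᵖ R :=
  Submodule.span Rᵐᵒᵖ ({r} : Set R)


section Aux

variable {R : Type u} [Ring R]

private lemma rprod_singleton' (A : Submodule Rᵐᵒᵖ R) : rprod [A] = A := rfl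

private lemma rprod_cons' (A : Submodule Rᵐᵒᵖ R) (l : List (Submodule Rᵐᵒᵖ R)) (hl : l ≠ []) :
    rprod (A :: l) = rmul A (rprod l) := by
  cases l with
  | nil => exact absurd rfl hl
  | cons B l' => rfl

private lemma rid_mul_mem {A : Submodule Rᵐᵒᵖ R} {x : R} (hx : x ∈ A) (t : R) : x * t ∈ A := by
  simpa using A.smul_mem (op t) hx

private lemma mem_rspan_iff {r x : R} : x ∈ rspan r ↔ ∃ t : R, r * t = x := by
  rw [rspan, Submodule.mem_span_singleton]
  constructor
  · rintro ⟨c, rfl⟩; exact ⟨c.unop, by simp⟩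
  · rintro ⟨t, rfl⟩; exact ⟨op t, by simp⟩

private lemma rspan_le {r : R} {A : Submodule Rᵐᵒᵖ R} (h : r ∈ A) : rspan r ≤ A :=
  Submodule.span_le.2 (by simpa using h)

private lemma mul_mem_rmul {A B : Submodule Rᵐᵒᵖ R} {a b : R} (ha : a ∈ A) (hb : b ∈ B) :
    a * b ∈ rmul A B := Submodule.subset_span ⟨a, ha, b, hb, rfl⟩

private lemma rmul_le_left {A B : Submodule Rᵐᵒᵖ R} : rmul A B ≤ A := by
  rw [rmul, Submodule.span_le]
  rintro x ⟨a, ha, b, hb, rfl⟩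
  exact rid_mul_mem ha b

private lemma rmul_induction {A B : Submodule Rᵐᵒᵖ R} {P : R → Prop} {x : R} (hx : x ∈ rmul A B)
    (h0 : P 0) (hgen : ∀ a ∈ A, ∀ b ∈ B, P (a * b))
    (hadd : ∀ x y, P x → P y → P (x + y)) : P x := by
  let S : Set R := {x : R | ∃ a ∈ A, ∃ b ∈ B, x = a * b}
  let W : Submodule Rᵐᵒᵖ R :=
    { carrier := AddSubmonoid.closure S
      add_mem' := fun h1 h2 => AddSubmonoid.add_mem _ h1 h2
      zero_mem' := AddSubmonoid.zero_mem _
      smul_mem' := by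
        intro m y hy
        induction hy using AddSubmonoid.closure_induction with
        | mem z hz =>
          obtain ⟨a, ha, b, hb, rfl⟩ := hz
          refine AddSubmonoid.subset_closure ⟨a, ha, b * m.unop, rid_mul_mem hb _, ?_⟩
          simp [mul_assoc]
        | zero => simpa using (AddSubmonoid.closure S).zero_mem
        | add z w _ _ hz hw => simpa [smul_add] using AddSubmonoid.add_mem _ hz hw }
  have hx' : x ∈ AddSubmonoid.closure S := by
    have hle : rmul A B ≤ W := Submodule.span_le.2 (fun z hz => AddSubmonoid.subset_closure hz)
    exact hle hx
  clear hx
  induction hx' using AddSubmonoid.closure_induction with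
  | mem z hz => obtain ⟨a, ha, b, hb, rfl⟩ := hz; exact hgen a ha b hb
  | zero => exact h0
  | add z w _ _ hz hw => exact hadd _ _ hz hw

private lemma rmul_assoc (A B C : Submodule Rᵐᵒᵖ R) :
    rmul (rmul A B) C = rmul A (rmul B C) := by
  have hT : ∀ a ∈ A, ∀ b ∈ B, ∀ c ∈ C,
      a * b * c ∈ Submodule.span Rᵐᵒᵖ {x : R | ∃ a ∈ A, ∃ b ∈ B, ∃ c ∈ C, x = a * b * c} :=
    fun a ha b hb c hc => Submodule.subset_span ⟨a, ha, b, hb, c, hc, rfl⟩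
  set T := Submodule.span Rᵐᵒᵖ {x : R | ∃ a ∈ A, ∃ b ∈ B, ∃ c ∈ C, x = a * b * c} with hTdef
  have h1 : rmul (rmul A B) C ≤ T := by
    rw [rmul, Submodule.span_le]
    rintro x ⟨y, hy, c, hc, rfl⟩
    refine rmul_induction (P := fun y => y * c ∈ T) hy ?_ ?_ ?_
    · simpa using T.zero_mem
    · exact fun a ha b hb => hT a ha b hb c hc
    · exact fun u v hu hv => by simpa [add_mul] using T.add_mem hu hv
  have h2 : T ≤ rmul (rmul A B) C := by
    rw [hTdef, Submodule.span_le]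
    rintro x ⟨a, ha, b, hb, c, hc, rfl⟩
    exact mul_mem_rmul (mul_mem_rmul ha hb) hc
  have h3 : rmul A (rmul B C) ≤ T := by
    rw [rmul, Submodule.span_le]
    rintro x ⟨a, ha, y, hy, rfl⟩
    refine rmul_induction (P := fun y => a * y ∈ T) hy ?_ ?_ ?_
    · simpa using T.zero_mem
    · exact fun b hb c hc => by simpa [mul_assoc] using hT a ha b hb c hc
    · exact fun u v hu hv => by simpa [mul_add] using T.add_mem hu hv
  have h4 : T ≤ rmul A (rmul B C) := by
    rw [hTdef, Submodule.span_le]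
    rintro x ⟨a, ha, b, hb, c, hc, rfl⟩
    simpa [mul_assoc] using mul_mem_rmul ha (mul_mem_rmul hb hc)
  exact le_antisymm (h1.trans h4) (h3.trans h2)

private lemma rmul_rprod_comm (B : Submodule Rᵐᵒᵖ R) :
    ∀ (l : List (Submodule Rᵐᵒᵖ R)), l ≠ [] → (∀ C ∈ l, rmul B C = rmul C B) →
      rmul B (rprod l) = rmul (rprod l) B := by
  intro l
  induction l with
  | nil => intro h; exact absurd rfl h
  | cons C l ih =>
    intro _ hc
    cases l with
    | nil => exact hc C (by simp)
    | cons D l' =>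
      rw [rprod_cons' C (D :: l') (by simp)]
      rw [← rmul_assoc, hc C (by simp), rmul_assoc, ih (by simp) (fun E hE => hc E (by simp [hE])),
        ← rmul_assoc]

private lemma coindep_split {n : ℕ} {F : Fin n → Submodule Rᵐᵒᵖ R} (h : Coindep F) (i : Fin n) :
    ∃ b ∈ F i, ∃ e ∈ ⨅ j, ⨅ (_ : j ≠ i), F j, b + e = (1 : R) := by
  have h1 : (1 : R) ∈ F i ⊔ ⨅ j, ⨅ (_ : j ≠ i), F j := by rw [h i]; exact Submodule.mem_top
  exact Submodule.mem_sup.1 h1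

private lemma coindep_tail {n : ℕ} {F : Fin (n+1) → Submodule Rᵐᵒᵖ R} (h : Coindep F) :
    Coindep (fun i : Fin n => F i.succ) := by
  intro i
  have h2 := h i.succ
  have hle : (⨅ j, ⨅ (_ : j ≠ i.succ), F j) ≤ ⨅ j, ⨅ (_ : j ≠ i), F j.succ :=
    le_iInf fun j => le_iInf fun hj => iInf₂_le j.succ (fun hc => hj (Fin.succ_injective n hc))
  exact eq_top_iff.2 (le_trans h2.ge (sup_le_sup_left hle _))

private lemma iInf_ne_zero_le {n : ℕ} (F : Fin (n+1) → Submodule Rᵐᵒᵖ R) :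
    (⨅ j, ⨅ (_ : j ≠ (0 : Fin (n+1))), F j) ≤ ⨅ i : Fin n, F i.succ :=
  le_iInf fun i => iInf₂_le i.succ (Fin.succ_ne_zero i)

private lemma rprod_ofFn_eq_iInf : ∀ {n : ℕ} (F : Fin (n+1) → Submodule Rᵐᵒᵖ R),
    (∀ i j, rmul (F i) (F j) = rmul (F j) (F i)) → Coindep F →
    rprod (List.ofFn F) = ⨅ i, F i := by
  intro n
  induction n with
  | zero =>
    intro F _ _
    have h1 : List.ofFn F = [F 0] := by simp [List.ofFn_succ]
    rw [h1, rprod_singleton']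
    exact le_antisymm (le_iInf fun i => by rw [Fin.eq_zero i]) (iInf_le _ 0)
  | succ n ih =>
    intro F hcomm hcoind
    set G : Fin (n+1) → Submodule Rᵐᵒᵖ R := fun i => F i.succ with hGdef
    have hG : rprod (List.ofFn G) = ⨅ i, G i :=
      ih G (fun i j => hcomm _ _) (coindep_tail hcoind)
    have hofn : List.ofFn F = F 0 :: List.ofFn G := List.ofFn_succ
    have hne : List.ofFn G ≠ [] := by
      intro hc
      have := congrArg List.length hc
      simp at this
    have hcommG : rmul (F 0) (rprod (List.ofFn G)) = rmul (rprod (List.ofFn G)) (F 0) := by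
      refine rmul_rprod_comm _ _ hne (fun C hC => ?_)
      obtain ⟨i, rfl⟩ := List.mem_ofFn.1 hC
      exact hcomm 0 i.succ
    rw [hofn, rprod_cons' _ _ hne]
    have hsplit : (⨅ i : Fin (n+2), F i) = F 0 ⊓ ⨅ i, G i := by
      refine le_antisymm (le_inf (iInf_le _ 0) (le_iInf fun i => iInf_le _ i.succ)) ?_
      refine le_iInf fun j => ?_
      rcases Fin.eq_zero_or_eq_succ j with rfl | ⟨i, rfl⟩
      · exact inf_le_left
      · exact inf_le_right.trans (iInf_le _ i)
    rw [hsplit]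
    refine le_antisymm (le_inf rmul_le_left ?_) ?_
    · rw [hcommG, ← hG]
      exact rmul_le_left
    · intro x hx
      have h1 : (1 : R) ∈ F 0 ⊔ ⨅ j, ⨅ (_ : j ≠ 0), F j := by
        rw [hcoind 0]; exact Submodule.mem_top
      obtain ⟨b, hb, e, he, hbe⟩ := Submodule.mem_sup.1 h1
      have hxP : x ∈ rprod (List.ofFn G) := by rw [hG]; exact hx.2
      have heP : e ∈ rprod (List.ofFn G) := by rw [hG]; exact iInf_ne_zero_le F he
      have hbx : b * x ∈ rmul (F 0) (rprod (List.ofFn G)) := mul_mem_rmul hb hxP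
      have hex : e * x ∈ rmul (rprod (List.ofFn G)) (F 0) := mul_mem_rmul heP hx.1
      rw [← hcommG] at hex
      have hxx : x = b * x + e * x := by rw [← add_mul, hbe, one_mul]
      rw [hxx]
      exact add_mem hbx hex

private lemma mem_sup_of_map_le {B : Submodule Rᵐᵒᵖ R} {x y : R}
    (hmap : (rspan x).map B.mkQ ≤ (rspan y).map B.mkQ) : x ∈ rspan y ⊔ B := by
  have hx : B.mkQ x ∈ (rspan x).map B.mkQ :=
    ⟨x, Submodule.mem_span_singleton_self x, rfl⟩
  obtain ⟨z, hz, hzx⟩ := hmap hx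
  have hxz : x - z ∈ B := by
    rw [← Submodule.Quotient.eq]
    simpa [Submodule.mkQ_apply] using hzx.symm
  exact Submodule.mem_sup.2 ⟨z, hz, x - z, hxz, by abel⟩

private lemma exists_gen (B : Submodule Rᵐᵒᵖ R) (hu : IsUniserialMod Rᵐᵒᵖ (R ⧸ B))
    (A : Submodule Rᵐᵒᵖ R) (hfg : A.FG) : ∃ a ∈ A, A ≤ rspan a ⊔ B := by
  classical
  obtain ⟨s, rfl⟩ := hfg
  induction s using Finset.induction_on with
  | empty => exact ⟨0, Submodule.zero_mem _, by simp⟩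
  | @insert g s hgs ih =>
    obtain ⟨a, haA, hle⟩ := ih
    have hspan : Submodule.span Rᵐᵒᵖ (↑(insert g s) : Set R)
        = rspan g ⊔ Submodule.span Rᵐᵒᵖ (↑s : Set R) := by
      rw [Finset.coe_insert, Submodule.span_insert]; rfl
    rcases hu ((rspan g).map B.mkQ) ((rspan a).map B.mkQ) with hcase | hcase
    · refine ⟨a, Submodule.span_mono (by simp) haA, ?_⟩
      rw [hspan]
      refine sup_le ?_ hle
      exact rspan_le (mem_sup_of_map_le hcase)
    · refine ⟨g, Submodule.subset_span (by simp), ?_⟩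
      rw [hspan]
      have hga : a ∈ rspan g ⊔ B := mem_sup_of_map_le hcase
      refine sup_le le_sup_left (hle.trans ?_)
      exact sup_le (rspan_le hga) le_sup_right

private lemma caseBig {n : ℕ} (F : Fin (n+2) → Submodule Rᵐᵒᵖ R)
    (hcomm : ∀ i j, rmul (F i) (F j) = rmul (F j) (F i)) (hcoind : Coindep F)
    (hu : ∀ i, IsUniserialMod Rᵐᵒᵖ (R ⧸ F i)) {r : R} (heq : rspan r = ⨅ i, F i)
    (A : Submodule Rᵐᵒᵖ R) (hfg : A.FG) (hrA : r ∈ A) :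
    ∃ s ∈ A, A = rspan r ⊔ rspan s := by
  classical
  have hts : ∀ i : Fin (n+2), ∀ c x : R, x ∈ F i → c * x ∈ F i := by
    intro i c x hx
    obtain ⟨b, hb, e, he, hbe⟩ := coindep_split hcoind i
    have hj : ∃ j : Fin (n+2), j ≠ i := by
      rcases eq_or_ne i 0 with rfl | h0
      · exact ⟨1, Fin.ne_of_val_ne (by simp)⟩
      · exact ⟨0, Ne.symm h0⟩
    obtain ⟨j, hj⟩ := hj
    have hx' : c * x = b * (c * x) + (e * c) * x := by
      calc c * x = (b + e) * (c * x) := by rw [hbe, one_mul]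
        _ = b * (c * x) + (e * c) * x := by rw [add_mul, mul_assoc]
    rw [hx']
    refine add_mem (rid_mul_mem hb _) ?_
    have hec : e * c ∈ F j := by
      have h3 : e * c ∈ (⨅ k, ⨅ (_ : k ≠ i), F k) := rid_mul_mem he c
      exact (Submodule.mem_iInf _).1 ((Submodule.mem_iInf _).1 h3 j) hj
    have h2 : (e * c) * x ∈ rmul (F j) (F i) := mul_mem_rmul hec hx
    rw [hcomm j i] at h2
    exact rmul_le_left h2
  choose b hb e he hbe using fun i => coindep_split hcoind i
  choose a haA hgen using fun i => exists_gen (F i) (hu i) A hfg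
  set s : R := ∑ i, a i * e i with hs
  have hje : ∀ {i j : Fin (n+2)}, j ≠ i → e j ∈ F i := by
    intro i j hji
    exact (Submodule.mem_iInf _).1 ((Submodule.mem_iInf _).1 (he j) i) (Ne.symm hji)
  have hsA : s ∈ A := Submodule.sum_mem _ fun i _ => rid_mul_mem (haA i) (e i)
  have hclaim1 : ∀ i, s - a i ∈ F i := by
    intro i
    have hei : e i = 1 - b i := eq_sub_of_add_eq' (hbe i)
    have hrw : s - a i = (∑ j ∈ Finset.univ.erase i, a j * e j) + (-(a i * b i)) := by
      have h1 : s = a i * e i + ∑ j ∈ Finset.univ.erase i, a j * e j :=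
        (Finset.add_sum_erase _ _ (Finset.mem_univ i)).symm
      rw [h1, hei]; noncomm_ring
    rw [hrw]
    refine add_mem (Submodule.sum_mem _ fun j hj => ?_) (neg_mem (hts i (a i) (b i) (hb i)))
    exact hts i (a j) (e j) (hje (Finset.ne_of_mem_erase hj))
  refine ⟨s, hsA, le_antisymm ?_ (sup_le (rspan_le hrA) (rspan_le hsA))⟩
  intro x hx
  have hdecomp : ∀ i, ∃ t : R, x - s * t ∈ F i := by
    intro i
    obtain ⟨y, hy, c, hc, hyc⟩ := Submodule.mem_sup.1 (hgen i hx)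
    obtain ⟨t, ht⟩ := mem_rspan_iff.1 hy
    refine ⟨t, ?_⟩
    have hx2 : x - s * t = (a i - s) * t + c := by rw [← hyc, ← ht]; noncomm_ring
    rw [hx2]
    refine add_mem (rid_mul_mem ?_ t) hc
    simpa using neg_mem (hclaim1 i)
  choose t ht using hdecomp
  set T : R := ∑ i, e i * t i with hT
  have hfin : ∀ i, x - s * T ∈ F i := by
    intro i
    have hei : e i = 1 - b i := eq_sub_of_add_eq' (hbe i)
    have hTrw : T - t i = (∑ j ∈ Finset.univ.erase i, e j * t j) + (-(b i * t i)) := by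
      have h1 : T = e i * t i + ∑ j ∈ Finset.univ.erase i, e j * t j :=
        (Finset.add_sum_erase _ _ (Finset.mem_univ i)).symm
      rw [h1, hei]; noncomm_ring
    have hTi : T - t i ∈ F i := by
      rw [hTrw]
      exact add_mem (Submodule.sum_mem _ fun j hj =>
        rid_mul_mem (hje (Finset.ne_of_mem_erase hj)) _) (neg_mem (rid_mul_mem (hb i) _))
    have hx3 : x - s * T = (x - s * t i) - s * (T - t i) := by noncomm_ring
    rw [hx3]
    exact sub_mem (ht i) (hts i s _ hTi)
  have hxr : x - s * T ∈ rspan r := by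
    rw [heq]
    exact (Submodule.mem_iInf _).2 hfin
  have hxs : s * T ∈ rspan s := mem_rspan_iff.2 ⟨T, rfl⟩
  have hxx : x = (x - s * T) + s * T := by abel
  rw [hxx]
  exact add_mem (Submodule.mem_sup_left hxr) (Submodule.mem_sup_right hxs)

end Aux

/-- Corollary 3.6: if `rR` has a serial factorization for every non-zero `r ∈ R`, then every
finitely generated non-zero right ideal `A` can be generated by two elements, the first of
which can be any arbitrarily fixed non-zero element of `A`. -/

theorem statement15 {R : Type u} [Ring R] [Nontrivial R]
    (h : ∀ r : R, r ≠ 0 → HasSerialFact (rspan r)) :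
    ∀ A : Submodule Rᵐᵒᵖ R, A.FG → A ≠ ⊥ →
      ∀ r ∈ A, r ≠ (0 : R) → ∃ s ∈ A, A = rspan r ⊔ rspan s := by
  intro A hfg _hA r hrA hr
  obtain ⟨n, F, hne, hcomm, hcoind, hu, heq⟩ := h r hr
  match n, F, hne, hcomm, hcoind, hu, heq with
  | 0, F, _, _, _, _, heq =>
    have htop : rspan r = ⊤ := by
      rw [heq]
      have : List.ofFn F = [] := List.ofFn_zero
      rw [this]
      rfl
    refine ⟨0, A.zero_mem, ?_⟩
    have hAtop : A = ⊤ := top_unique (htop ▸ rspan_le hrA)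
    rw [hAtop, htop]
    simp
  | 1, F, _, _, _, hu, heq =>
    have hofn : List.ofFn F = [F 0] := by simp [List.ofFn_succ]
    rw [hofn, rprod_singleton'] at heq
    obtain ⟨a, haA, hle⟩ := exists_gen (F 0) (hu 0) A hfg
    refine ⟨a, haA, le_antisymm ?_ (sup_le (rspan_le hrA) (rspan_le haA))⟩
    have hre : rspan a ⊔ F 0 = rspan r ⊔ rspan a := by rw [← heq, sup_comm]
    exact hle.trans hre.le
  | (n+2), F, _, hcomm, hcoind, hu, heq =>
    have heq' : rspan r = ⨅ i, F i := by
      rw [heq, rprod_ofFn_eq_iInf F hcomm hcoind]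
    exact caseBig F hcomm hcoind hu heq' A hfg hrA
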